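/- Let f, g ∈ I be nonzero and t ∈ 𝕋ⁿ. If t·S(f) = S(g), then S(tf) = t·S(f). -/

import Mathlib

open MvPolynomial

namespace F5

noncomputable section
open scoped Classical

/-- Monomials (power products) in `n` variables, represented by exponent vectors. -/
abbrev Mon (n : ℕ) : Type := Fin n →₀ ℕ

/-- Module terms `t·eₗ` of the free module `Pᵐ`. -/
abbrev MTerm (n m : ℕ) : Type := (Fin n →₀ ℕ) × Fin m

/-- Action of a monomial on a module term: `u • (t eₗ) = (u t) eₗ`. -/
def mact {n m : ℕ} (u : Mon n) (σ : MTerm n m) : MTerm n m := (u + σ.1, σ.2)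

/-- An admissible order on monomials: a linear order with `1 ≤ t` and
compatibility with multiplication. -/
structure AdmissibleOrder (n : ℕ) where
  ord : LinearOrder (Mon n)
  one_le : ∀ t : Mon n, ord.le 0 t
  mul_lt_mul : ∀ s t u : Mon n, ord.lt s t → ord.lt (u + s) (u + t)

/-- An admissible module order on module terms: a linear well-order compatible
with the monomial action, and such that `σ ≤ u σ`. -/
structure ModuleOrder (n m : ℕ) where
  ord : LinearOrder (MTerm n m)
  wf : WellFounded ord.lt
  mul_lt_mul : ∀ (σ τ : MTerm n m) (u : Mon n), ord.lt σ τ → ord.lt (mact u σ) (mact u τ)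
  le_mul : ∀ (σ : MTerm n m) (u : Mon n), ord.le σ (mact u σ)

variable {k : Type*} [Field k] {n m : ℕ}

/-- The leading monomial of a polynomial with respect to `μ` (junk value `0` for `f = 0`). -/
noncomputable def pLT (μ : AdmissibleOrder n) (f : MvPolynomial (Fin n) k) : Mon n :=
  if h : f.support.Nonempty then @Finset.max' _ μ.ord f.support h else 0

/-- The leading coefficient of a polynomial with respect to `μ`. -/
noncomputable def pLC (μ : AdmissibleOrder n) (f : MvPolynomial (Fin n) k) : k :=
  f.coeff (pLT μ f)

/-- The set (finset) of module terms occurring in an element of `Pᵐ`. -/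
noncomputable def msupport (u : Fin m → MvPolynomial (Fin n) k) : Finset (MTerm n m) :=
  letI := Classical.decEq (MTerm n m)
  Finset.univ.biUnion fun l => (u l).support.image fun t => (t, l)

/-- A junk default module term (needs `m ≠ 0`). -/
def mdefault [NeZero m] : MTerm n m := (0, ⟨0, Nat.pos_of_ne_zero (NeZero.ne m)⟩)

/-- The leading module term of a nonzero element of `Pᵐ` with respect to `μ'`
(junk value for `0`). -/
noncomputable def mLT [NeZero m] (μ' : ModuleOrder n m) (u : Fin m → MvPolynomial (Fin n) k) :
    MTerm n m :=
  if h : (msupport u).Nonempty then @Finset.max' _ μ'.ord _ h else mdefault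

/-- The map `v : Pᵐ → P`, `v(eᵢ) = fᵢ`. -/
noncomputable def vmap (F : Fin m → MvPolynomial (Fin n) k)
    (u : Fin m → MvPolynomial (Fin n) k) : MvPolynomial (Fin n) k :=
  ∑ i, u i * F i

/-- The ideal `I = (f₁, …, fₘ)`. -/
noncomputable def idealI (F : Fin m → MvPolynomial (Fin n) k) : Ideal (MvPolynomial (Fin n) k) :=
  Ideal.span (Set.range F)

/-- `LT(Syz F)`: leading module terms of nonzero syzygies of `F`. -/
def LTSyz [NeZero m] (μ' : ModuleOrder n m) (F : Fin m → MvPolynomial (Fin n) k) :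
    Set (MTerm n m) :=
  {σ | ∃ s : Fin m → MvPolynomial (Fin n) k, s ≠ 0 ∧ vmap F s = 0 ∧ mLT μ' s = σ}

/-- The signature `S(f)`: the `μ'`-minimum of `{LT(u) : v(u) = f}` (junk for `f = 0` or
`f ∉ I`). -/
noncomputable def sig [NeZero m] (μ' : ModuleOrder n m) (F : Fin m → MvPolynomial (Fin n) k)
    (f : MvPolynomial (Fin n) k) : MTerm n m :=
  if hne : {σ : MTerm n m |
      ∃ u : Fin m → MvPolynomial (Fin n) k, u ≠ 0 ∧ vmap F u = f ∧ mLT μ' u = σ}.Nonempty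
  then μ'.wf.min _ hne else mdefault

/-- `f` S-reduces to `g` with `h`, with respect to `σ`. -/
noncomputable def SReduces [NeZero m] (μ : AdmissibleOrder n) (μ' : ModuleOrder n m)
    (F : Fin m → MvPolynomial (Fin n) k)
    (f h g : MvPolynomial (Fin n) k) (σ : MTerm n m) : Prop :=
  ∃ (t : Mon n) (α : k), α ≠ 0 ∧ g = f - (monomial t α) * h ∧
    (g = 0 ∨ μ.ord.lt (pLT μ g) (pLT μ f)) ∧
    μ'.ord.lt (sig μ' F ((monomial t (1 : k)) * h)) σ

/-- `f` is S-irreducible with respect to `σ`. -/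
noncomputable def SIrr [NeZero m] (μ : AdmissibleOrder n) (μ' : ModuleOrder n m)
    (F : Fin m → MvPolynomial (Fin n) k) (f : MvPolynomial (Fin n) k) (σ : MTerm n m) : Prop :=
  f = 0 ∨ ¬ ∃ h : MvPolynomial (Fin n) k, h ∈ idealI F ∧ h ≠ 0 ∧
    ∃ g : MvPolynomial (Fin n) k, SReduces μ μ' F f h g σ

/-- `G` is an S-Gröbner basis (of `I` w.r.t. `μ`, `F`, `μ'`). -/
noncomputable def IsSGB [NeZero m] (μ : AdmissibleOrder n) (μ' : ModuleOrder n m)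
    (F : Fin m → MvPolynomial (Fin n) k) (G : Set (MvPolynomial (Fin n) k)) : Prop :=
  (∀ g ∈ G, g ∈ idealI F ∧ g ≠ 0) ∧
  ∀ f : MvPolynomial (Fin n) k, f ∈ idealI F → f ≠ 0 → SIrr μ μ' F f (sig μ' F f) →
    ∃ g ∈ G, ∃ t : Mon n,
      pLT μ ((monomial t (1 : k)) * g) = pLT μ f ∧
      sig μ' F ((monomial t (1 : k)) * g) = sig μ' F f

/-- `LT(I)`: the set of leading monomials of nonzero elements of `I`. -/
def LTIdeal (μ : AdmissibleOrder n) (F : Fin m → MvPolynomial (Fin n) k) : Set (Mon n) :=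
  {t | ∃ f : MvPolynomial (Fin n) k, f ∈ idealI F ∧ f ≠ 0 ∧ pLT μ f = t}

/-- `φ(t)`: the `μ'`-minimum signature of nonzero elements of `I` with leading monomial `t`. -/
noncomputable def phi [NeZero m] (μ : AdmissibleOrder n) (μ' : ModuleOrder n m)
    (F : Fin m → MvPolynomial (Fin n) k) (t : Mon n) : MTerm n m :=
  if hne : {σ : MTerm n m | ∃ f : MvPolynomial (Fin n) k,
      f ∈ idealI F ∧ f ≠ 0 ∧ pLT μ f = t ∧ sig μ' F f = σ}.Nonempty
  then μ'.wf.min _ hne else mdefault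

/-- `f` is a primitive S-irreducible polynomial. -/
noncomputable def PrimSIrr [NeZero m] (μ : AdmissibleOrder n) (μ' : ModuleOrder n m)
    (F : Fin m → MvPolynomial (Fin n) k) (f : MvPolynomial (Fin n) k) : Prop :=
  f ∈ idealI F ∧ f ≠ 0 ∧ SIrr μ μ' F f (sig μ' F f) ∧
  ¬ ∃ (f' : MvPolynomial (Fin n) k) (t : Mon n),
      f' ∈ idealI F ∧ f' ≠ 0 ∧ t ≠ 0 ∧ SIrr μ μ' F f' (sig μ' F f') ∧
      pLT μ ((monomial t (1 : k)) * f') = pLT μ f ∧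
      sig μ' F ((monomial t (1 : k)) * f') = sig μ' F f

/-- The lcm of two monomials (pointwise maximum of exponents). -/
def lcmMon {n : ℕ} (s t : Mon n) : Mon n := t + (s - t)

/-- The term `u₁ = lcm(LT g₁, LT g₂)/(LC g₁ · LT g₁)` (when the first argument is `g₁`). -/
noncomputable def uterm (μ : AdmissibleOrder n) (g₁ g₂ : MvPolynomial (Fin n) k) :
    MvPolynomial (Fin n) k :=
  monomial (lcmMon (pLT μ g₁) (pLT μ g₂) - pLT μ g₁) (pLC μ g₁)⁻¹

/-- The S-polynomial of `g₁` and `g₂`. -/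
noncomputable def Spol (μ : AdmissibleOrder n) (g₁ g₂ : MvPolynomial (Fin n) k) :
    MvPolynomial (Fin n) k :=
  uterm μ g₁ g₂ * g₁ - uterm μ g₂ g₁ * g₂

/-- `(g₁, g₂)` is a normal pair. -/
noncomputable def NormalPair [NeZero m] (μ : AdmissibleOrder n) (μ' : ModuleOrder n m)
    (F : Fin m → MvPolynomial (Fin n) k) (g₁ g₂ : MvPolynomial (Fin n) k) : Prop :=
  PrimSIrr μ μ' F g₁ ∧ PrimSIrr μ μ' F g₂ ∧
  sig μ' F (uterm μ g₁ g₂ * g₁) =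
    mact (lcmMon (pLT μ g₁) (pLT μ g₂) - pLT μ g₁) (sig μ' F g₁) ∧
  sig μ' F (uterm μ g₂ g₁ * g₂) =
    mact (lcmMon (pLT μ g₂) (pLT μ g₁) - pLT μ g₂) (sig μ' F g₂) ∧
  sig μ' F (uterm μ g₁ g₂ * g₁) ≠ sig μ' F (uterm μ g₂ g₁ * g₂)


end
end F5

open F5 MvPolynomial

noncomputable section Helpers

open scoped Classical

variable {k : Type*} [Field k] {n m : ℕ} [NeZero m]

section OrdFacts

variable {n m : ℕ} {μ' : ModuleOrder n m} {a b c : MTerm n m}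

theorem ord_le_refl : μ'.ord.le a a := μ'.ord.le_refl a

theorem ord_le_of_lt (h : μ'.ord.lt a b) : μ'.ord.le a b :=
  @le_of_lt _ μ'.ord.toPartialOrder.toPreorder a b h

theorem ord_lt_or_eq (h : μ'.ord.le a b) : μ'.ord.lt a b ∨ a = b :=
  @lt_or_eq_of_le _ μ'.ord.toPartialOrder a b h

theorem ord_le_antisymm (h1 : μ'.ord.le a b) (h2 : μ'.ord.le b a) : a = b :=
  @le_antisymm _ μ'.ord.toPartialOrder a b h1 h2

theorem ord_lt_of_le_of_ne (h1 : μ'.ord.le a b) (h2 : a ≠ b) : μ'.ord.lt a b :=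
  @lt_of_le_of_ne _ μ'.ord.toPartialOrder a b h1 h2

theorem ord_le_trans (h1 : μ'.ord.le a b) (h2 : μ'.ord.le b c) : μ'.ord.le a c :=
  @le_trans _ μ'.ord.toPartialOrder.toPreorder a b c h1 h2

theorem ord_lt_of_le_of_lt (h1 : μ'.ord.le a b) (h2 : μ'.ord.lt b c) : μ'.ord.lt a c :=
  @lt_of_le_of_lt _ μ'.ord.toPartialOrder.toPreorder a b c h1 h2

theorem ord_lt_irrefl (h : μ'.ord.lt a a) : False :=
  @lt_irrefl _ μ'.ord.toPartialOrder.toPreorder a h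

theorem ord_le_of_not_lt (h : ¬ μ'.ord.lt a b) : μ'.ord.le b a :=
  (@not_lt _ μ'.ord a b).mp h

theorem ord_not_lt_of_le (h : μ'.ord.le b a) : ¬ μ'.ord.lt a b :=
  (@not_lt _ μ'.ord a b).mpr h

end OrdFacts

theorem mem_msupport {u : Fin m → MvPolynomial (Fin n) k} {σ : MTerm n m} :
    σ ∈ msupport u ↔ (u σ.2).coeff σ.1 ≠ 0 := by
  simp only [msupport, Finset.mem_biUnion, Finset.mem_univ, true_and, Finset.mem_image,
    MvPolynomial.mem_support_iff]
  constructor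
  · rintro ⟨l, s, hs, h⟩
    rw [← h]
    exact hs
  · intro hσ
    exact ⟨σ.2, σ.1, hσ, rfl⟩

theorem msupport_nonempty_iff {u : Fin m → MvPolynomial (Fin n) k} :
    (msupport u).Nonempty ↔ u ≠ 0 := by
  constructor
  · rintro ⟨σ, hσ⟩ rfl
    rw [mem_msupport] at hσ
    simp at hσ
  · intro hu
    obtain ⟨i, hi⟩ := Function.ne_iff.mp hu
    obtain ⟨s, hs⟩ := MvPolynomial.ne_zero_iff.mp hi
    exact ⟨(s, i), mem_msupport.mpr hs⟩

theorem mLT_mem {μ' : ModuleOrder n m} {u : Fin m → MvPolynomial (Fin n) k} (hu : u ≠ 0) :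
    mLT μ' u ∈ msupport u := by
  rw [mLT, dif_pos (msupport_nonempty_iff.mpr hu)]
  exact @Finset.max'_mem _ μ'.ord _ _

theorem mLT_coeff_ne_zero {μ' : ModuleOrder n m} {u : Fin m → MvPolynomial (Fin n) k}
    (hu : u ≠ 0) : (u (mLT μ' u).2).coeff (mLT μ' u).1 ≠ 0 :=
  mem_msupport.mp (mLT_mem hu)

theorem le_mLT {μ' : ModuleOrder n m} {u : Fin m → MvPolynomial (Fin n) k} {σ : MTerm n m}
    (hσ : σ ∈ msupport u) : μ'.ord.le σ (mLT μ' u) := by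
  rw [mLT, dif_pos ⟨σ, hσ⟩]
  exact @Finset.le_max' _ μ'.ord _ _ hσ

theorem coeff_eq_zero_of_mLT_lt {μ' : ModuleOrder n m} {u : Fin m → MvPolynomial (Fin n) k}
    {σ : MTerm n m} (h : μ'.ord.lt (mLT μ' u) σ) : (u σ.2).coeff σ.1 = 0 := by
  by_contra hc
  exact ord_not_lt_of_le (le_mLT (mem_msupport.mpr hc)) h

theorem mLT_eq_of {μ' : ModuleOrder n m} {u : Fin m → MvPolynomial (Fin n) k} {σ : MTerm n m}
    (hmem : σ ∈ msupport u) (hub : ∀ τ ∈ msupport u, μ'.ord.le τ σ) : mLT μ' u = σ := by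
  rw [mLT, dif_pos ⟨σ, hmem⟩]
  exact ord_le_antisymm (@Finset.max'_le _ μ'.ord _ _ _ hub) (@Finset.le_max' _ μ'.ord _ _ hmem)

theorem mact_mono {μ' : ModuleOrder n m} {σ τ : MTerm n m} (t : Mon n)
    (h : μ'.ord.le σ τ) : μ'.ord.le (mact t σ) (mact t τ) := by
  rcases ord_lt_or_eq h with h' | rfl
  · exact ord_le_of_lt (μ'.mul_lt_mul σ τ t h')
  · exact ord_le_refl

theorem vmap_zero (F : Fin m → MvPolynomial (Fin n) k) : vmap F 0 = 0 := by
  simp [vmap]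

theorem vmap_sub (F a b : Fin m → MvPolynomial (Fin n) k) :
    vmap F (a - b) = vmap F a - vmap F b := by
  simp [vmap, sub_mul, Finset.sum_sub_distrib]

theorem vmap_mul (F : Fin m → MvPolynomial (Fin n) k) (p : MvPolynomial (Fin n) k)
    (a : Fin m → MvPolynomial (Fin n) k) :
    vmap F (fun i => p * a i) = p * vmap F a := by
  simp [vmap, Finset.mul_sum, mul_assoc]

theorem mLT_monomial_mul {μ' : ModuleOrder n m} {u : Fin m → MvPolynomial (Fin n) k}
    (hu : u ≠ 0) (t : Mon n) :
    mLT μ' (fun i => (monomial t (1 : k)) * u i) = mact t (mLT μ' u) := by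
  apply mLT_eq_of
  · rw [mem_msupport]
    show ((monomial t (1 : k)) * u (mLT μ' u).2).coeff (t + (mLT μ' u).1) ≠ 0
    rw [MvPolynomial.coeff_monomial_mul, one_mul]
    exact mLT_coeff_ne_zero hu
  · intro τ hτ
    rw [mem_msupport] at hτ
    rw [MvPolynomial.coeff_monomial_mul'] at hτ
    split_ifs at hτ with hle
    · rw [one_mul] at hτ
      have h1 : ((τ.1 - t, τ.2) : MTerm n m) ∈ msupport u := mem_msupport.mpr hτ
      have h2 := mact_mono (μ' := μ') t (le_mLT h1)
      have h3 : mact t ((τ.1 - t, τ.2) : MTerm n m) = τ := by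
        simp only [mact]
        rw [add_tsub_cancel_of_le hle]
      exact h3 ▸ h2
    · exact absurd rfl hτ

theorem sig_spec {μ' : ModuleOrder n m} {F : Fin m → MvPolynomial (Fin n) k}
    {f : MvPolynomial (Fin n) k} (hfI : f ∈ idealI F) (hf : f ≠ 0) :
    ∃ u : Fin m → MvPolynomial (Fin n) k, u ≠ 0 ∧ vmap F u = f ∧ mLT μ' u = sig μ' F f := by
  obtain ⟨c, hc⟩ := Ideal.mem_span_range_iff_exists_fun.mp hfI
  have hcv : vmap F c = f := hc
  have hc0 : c ≠ 0 := by
    rintro rfl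
    rw [vmap_zero] at hcv
    exact hf hcv.symm
  have hne : {σ : MTerm n m |
      ∃ u : Fin m → MvPolynomial (Fin n) k, u ≠ 0 ∧ vmap F u = f ∧ mLT μ' u = σ}.Nonempty :=
    ⟨mLT μ' c, c, hc0, hcv, rfl⟩
  rw [sig, dif_pos hne]
  exact μ'.wf.min_mem _ hne

theorem sig_le_mLT {μ' : ModuleOrder n m} {F : Fin m → MvPolynomial (Fin n) k}
    {f : MvPolynomial (Fin n) k} (hf : f ≠ 0) {u : Fin m → MvPolynomial (Fin n) k}
    (hu : vmap F u = f) : μ'.ord.le (sig μ' F f) (mLT μ' u) := by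
  have hu0 : u ≠ 0 := by
    rintro rfl
    rw [vmap_zero] at hu
    exact hf hu.symm
  have hne : {σ : MTerm n m |
      ∃ v : Fin m → MvPolynomial (Fin n) k, v ≠ 0 ∧ vmap F v = f ∧ mLT μ' v = σ}.Nonempty :=
    ⟨mLT μ' u, u, hu0, hu, rfl⟩
  rw [sig, dif_pos hne]
  exact ord_le_of_not_lt (μ'.wf.not_lt_min _ (x := mLT μ' u) (by exact ⟨u, hu0, hu, rfl⟩))

end Helpers

/-- if `t·S(f) = S(g)` for some nonzero `g ∈ I`, then `S(tf) = t·S(f)`. -/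
theorem stmt_3 {k : Type*} [Field k] {n m : ℕ} [NeZero m]
    (μ' : ModuleOrder n m) (F : Fin m → MvPolynomial (Fin n) k)
    (f g : MvPolynomial (Fin n) k) (t : Mon n)
    (hfI : f ∈ idealI F) (hf : f ≠ 0)
    (hgI : g ∈ idealI F) (hg : g ≠ 0)
    (h : mact t (sig μ' F f) = sig μ' F g) :
    sig μ' F ((monomial t (1 : k)) * f) = mact t (sig μ' F f) := by
  classical
  obtain ⟨u, hu0, huf, huLT⟩ := sig_spec hfI hf
  have hmon0 : (monomial t (1 : k)) ≠ 0 := by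
    simp [MvPolynomial.monomial_eq_zero]
  have htf0 : (monomial t (1 : k)) * f ≠ 0 := mul_ne_zero hmon0 hf
  have htfI : (monomial t (1 : k)) * f ∈ idealI F := Ideal.mul_mem_left _ _ hfI
  set tu : Fin m → MvPolynomial (Fin n) k := fun i => (monomial t (1 : k)) * u i with htu_def
  have htu0 : tu ≠ 0 := by
    obtain ⟨i, hi⟩ := Function.ne_iff.mp hu0
    exact Function.ne_iff.mpr ⟨i, mul_ne_zero hmon0 hi⟩
  have htuv : vmap F tu = (monomial t (1 : k)) * f := by
    rw [htu_def, vmap_mul, huf]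
  have htuLT : mLT μ' tu = mact t (sig μ' F f) := by
    rw [htu_def, mLT_monomial_mul hu0, huLT]
  have h1 : μ'.ord.le (sig μ' F ((monomial t (1 : k)) * f)) (mact t (sig μ' F f)) :=
    htuLT ▸ sig_le_mLT htf0 htuv
  rcases ord_lt_or_eq h1 with hlt | heq
  · -- derive a contradiction
    exfalso
    rw [h] at hlt
    obtain ⟨w, hw0, hwv, hwLT⟩ := sig_spec (μ' := μ') htfI htf0
    have hwlt : μ'.ord.lt (mLT μ' w) (sig μ' F g) := hwLT ▸ hlt
    set τ0 := sig μ' F g with hτ0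
    -- the syzygy s = tu - w
    have hsv : vmap F (tu - w) = 0 := by
      rw [vmap_sub, htuv, hwv, sub_self]
    have hc_tu : (tu τ0.2).coeff τ0.1 ≠ 0 := by
      have := mLT_coeff_ne_zero (μ' := μ') htu0
      rwa [htuLT, h] at this
    have hc_w : (w τ0.2).coeff τ0.1 = 0 := coeff_eq_zero_of_mLT_lt hwlt
    have hd0 : ((tu - w) τ0.2).coeff τ0.1 ≠ 0 := by
      rw [Pi.sub_apply, MvPolynomial.coeff_sub, hc_w, sub_zero]
      exact hc_tu
    have hs_mem : τ0 ∈ msupport (tu - w) := mem_msupport.mpr hd0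
    have hs_ub : ∀ σ ∈ msupport (tu - w), μ'.ord.le σ τ0 := by
      intro σ hσ
      rw [mem_msupport, Pi.sub_apply, MvPolynomial.coeff_sub] at hσ
      have : (tu σ.2).coeff σ.1 ≠ 0 ∨ (w σ.2).coeff σ.1 ≠ 0 := by
        by_contra hcon
        push_neg at hcon
        rw [hcon.1, hcon.2, sub_zero] at hσ
        exact hσ rfl
      rcases this with h' | h'
      · have := le_mLT (μ' := μ') (mem_msupport.mpr h')
        rwa [htuLT, h] at this
      · exact ord_le_trans (le_mLT (μ' := μ') (mem_msupport.mpr h')) (ord_le_of_lt hwlt)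
    have hsLT : mLT μ' (tu - w) = τ0 := mLT_eq_of hs_mem hs_ub
    -- ug realizing sig g
    obtain ⟨ug, hug0, hugv, hugLT⟩ := sig_spec (μ' := μ') hgI hg
    set c := (ug τ0.2).coeff τ0.1 with hc_def
    set d := ((tu - w) τ0.2).coeff τ0.1 with hd_def
    have hc0 : c ≠ 0 := by
      have := mLT_coeff_ne_zero (μ' := μ') hug0
      rwa [hugLT] at this
    set u' : Fin m → MvPolynomial (Fin n) k :=
      fun i => ug i - C (c / d) * ((tu - w) i) with hu'_def
    have hu'v : vmap F u' = g := by
      have : vmap F u' = vmap F ug - C (c / d) * vmap F (tu - w) := by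
        rw [hu'_def]
        unfold vmap
        rw [Finset.mul_sum, ← Finset.sum_sub_distrib]
        apply Finset.sum_congr rfl
        intro i _
        ring
      rw [this, hugv, hsv, mul_zero, sub_zero]
    have hu'0 : u' ≠ 0 := by
      rintro h0
      exact hg (by rw [← hu'v, h0, vmap_zero])
    have hu'coeff : (u' τ0.2).coeff τ0.1 = 0 := by
      rw [hu'_def]
      simp only [MvPolynomial.coeff_sub, MvPolynomial.coeff_C_mul]
      rw [← hc_def, ← hd_def, div_mul_cancel₀ c hd0, sub_self]
    have hu'_ub : ∀ σ ∈ msupport u', μ'.ord.le σ τ0 := by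
      intro σ hσ
      rw [mem_msupport, hu'_def] at hσ
      simp only [MvPolynomial.coeff_sub, MvPolynomial.coeff_C_mul] at hσ
      have : (ug σ.2).coeff σ.1 ≠ 0 ∨ ((tu - w) σ.2).coeff σ.1 ≠ 0 := by
        by_contra hcon
        push_neg at hcon
        rw [hcon.1, hcon.2, mul_zero, sub_zero] at hσ
        exact hσ rfl
      rcases this with h' | h'
      · have := le_mLT (μ' := μ') (mem_msupport.mpr h')
        rwa [hugLT] at this
      · have := le_mLT (μ' := μ') (mem_msupport.mpr h')
        rwa [hsLT] at this
    have hu'lt : μ'.ord.lt (mLT μ' u') τ0 := by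
      refine ord_lt_of_le_of_ne (hu'_ub _ (mLT_mem hu'0)) ?_
      intro hEq
      exact mLT_coeff_ne_zero (μ' := μ') hu'0 (hEq ▸ hu'coeff)
    have hfin : μ'.ord.le (sig μ' F g) (mLT μ' u') := sig_le_mLT hg hu'v
    exact ord_lt_irrefl (ord_lt_of_le_of_lt hfin hu'lt)
  · exact heq
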